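/- Fix x₀ ∈ ℝ and s > 0, let π(x) = exp(−(x − x₀)²/(2s²))/√(2π s²) for x ∈ ℝ (the Normal density), and let the variance function be the constant σ²(x)/2 = s² (the Ornstein–Uhlenbeck process). Then the detailed-balance drift μ(x) = (1/(2π(x))) (d/dx)(σ²(x) π(x)) equals x₀ − x, the average variance is σ̂²/2 = s², the variance of π is m₂ − m₁² = s², and hence the ratio σ̂²/(2(m₂ − m₁²)) = 1, which equals the smallest nonzero eigenvalue λ₁ = 1 of the Ornstein–Uhlenbeck generator; thus the Ornstein–Uhlenbeck process attains the optimal convergence rate. -/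

import Mathlib

open MeasureTheory Set

private lemma integrable_sq_mul_exp {b : ℝ} (hb : 0 < b) :
    Integrable fun x : ℝ => x ^ 2 * Real.exp (-b * x ^ 2) := by
  have h := integrable_rpow_mul_exp_neg_mul_sq hb (s := 2) (by norm_num)
  have : ∀ x : ℝ, x ^ (2 : ℝ) = x ^ (2 : ℕ) := fun x => by
    rw [← Real.rpow_natCast x 2]; norm_num
  simpa [this] using h

private lemma integral_x_mul_exp {b : ℝ} (hb : 0 < b) :
    (∫ x : ℝ, x * Real.exp (-b * x ^ 2)) = 0 := by
  have hderiv : ∀ x : ℝ, HasDerivAt (fun y : ℝ => -(Real.exp (-b * y ^ 2) / (2 * b)))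
      (x * Real.exp (-b * x ^ 2)) x := by
    intro x
    have h1 : HasDerivAt (fun y : ℝ => -b * y ^ 2) (-b * (2 * x)) x := by
      simpa using ((hasDerivAt_pow 2 x).const_mul (-b))
    have h2 := (h1.exp.neg).div_const (2 * b)
    have h3 : -(Real.exp (-b * x ^ 2) * (-b * (2 * x))) / (2 * b)
        = x * Real.exp (-b * x ^ 2) := by
      field_simp
    have h4 : (fun y : ℝ => -Real.exp (-b * y ^ 2) / (2 * b))
        = fun y : ℝ => -(Real.exp (-b * y ^ 2) / (2 * b)) := by
      funext y; rw [neg_div]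
    rw [← h3, ← h4]
    exact h2
  have hf' : Integrable fun x : ℝ => x * Real.exp (-b * x ^ 2) :=
    integrable_mul_exp_neg_mul_sq hb
  have hf : Integrable fun y : ℝ => -(Real.exp (-b * y ^ 2) / (2 * b)) :=
    ((integrable_exp_neg_mul_sq hb).div_const (2 * b)).neg
  exact integral_eq_zero_of_hasDerivAt_of_integrable hderiv hf' hf

private lemma integral_sq_mul_exp {b : ℝ} (hb : 0 < b) :
    (∫ x : ℝ, x ^ 2 * Real.exp (-b * x ^ 2)) = Real.sqrt (Real.pi / b) / (2 * b) := by
  have hderiv : ∀ x : ℝ, HasDerivAt (fun y : ℝ => y * Real.exp (-b * y ^ 2))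
      (Real.exp (-b * x ^ 2) - 2 * b * (x ^ 2 * Real.exp (-b * x ^ 2))) x := by
    intro x
    have h1 : HasDerivAt (fun y : ℝ => -b * y ^ 2) (-b * (2 * x)) x := by
      simpa using ((hasDerivAt_pow 2 x).const_mul (-b))
    have h2 := (hasDerivAt_id x).mul h1.exp
    refine h2.congr_deriv ?_
    simp
    ring
  have hf' : Integrable fun x : ℝ =>
      Real.exp (-b * x ^ 2) - 2 * b * (x ^ 2 * Real.exp (-b * x ^ 2)) :=
    (integrable_exp_neg_mul_sq hb).sub ((integrable_sq_mul_exp hb).const_mul _)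
  have hf : Integrable fun y : ℝ => y * Real.exp (-b * y ^ 2) :=
    integrable_mul_exp_neg_mul_sq hb
  have h0 := integral_eq_zero_of_hasDerivAt_of_integrable hderiv hf' hf
  rw [integral_sub (integrable_exp_neg_mul_sq hb) ((integrable_sq_mul_exp hb).const_mul _),
    integral_const_mul, integral_gaussian, sub_eq_zero] at h0
  have hb2 : (2 : ℝ) * b ≠ 0 := by positivity
  rw [h0, mul_div_cancel_left₀ _ hb2]

theorem statement13
    (x₀ s : ℝ) (hs : 0 < s)
    (ρ : ℝ → ℝ)
    (hρ : ∀ x, ρ x = Real.exp (-(x - x₀) ^ 2 / (2 * s ^ 2)) / Real.sqrt (2 * Real.pi * s ^ 2)) :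
    (∀ x : ℝ, 1 / (2 * ρ x) * deriv (fun y => 2 * s ^ 2 * ρ y) x = x₀ - x) ∧
    (∫ x : ℝ, s ^ 2 * ρ x) = s ^ 2 ∧
    (∫ x : ℝ, x ^ 2 * ρ x) - (∫ x : ℝ, x * ρ x) ^ 2 = s ^ 2 ∧
    (∫ x : ℝ, s ^ 2 * ρ x) / ((∫ x : ℝ, x ^ 2 * ρ x) - (∫ x : ℝ, x * ρ x) ^ 2) = 1 := by
  have hs2 : (0 : ℝ) < s ^ 2 := by positivity
  set b : ℝ := (2 * s ^ 2)⁻¹ with hbdef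
  have hb : 0 < b := by positivity
  set c : ℝ := (Real.sqrt (2 * Real.pi * s ^ 2))⁻¹ with hcdef
  have hsqrt_pos : 0 < Real.sqrt (2 * Real.pi * s ^ 2) := by
    apply Real.sqrt_pos.mpr; positivity
  have hρ' : ∀ x, ρ x = c * Real.exp (-b * (x - x₀) ^ 2) := by
    intro x
    rw [hρ x, hcdef]
    have : -(x - x₀) ^ 2 / (2 * s ^ 2) = -b * (x - x₀) ^ 2 := by
      rw [hbdef]; field_simp
    rw [this]; ring
  have hpib : Real.pi / b = 2 * Real.pi * s ^ 2 := by
    rw [hbdef]; field_simp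
  have hnorm : c * Real.sqrt (Real.pi / b) = 1 := by
    rw [hpib, hcdef]
    exact inv_mul_cancel₀ (ne_of_gt hsqrt_pos)
  have hs2b : (2 * b)⁻¹ = s ^ 2 := by
    rw [hbdef]; field_simp
  -- moments
  have hm0 : (∫ x : ℝ, ρ x) = 1 := by
    calc (∫ x : ℝ, ρ x) = ∫ x : ℝ, c * Real.exp (-b * (x - x₀) ^ 2) := by
          simp only [hρ']
      _ = ∫ y : ℝ, c * Real.exp (-b * y ^ 2) :=
          integral_sub_right_eq_self (fun y => c * Real.exp (-b * y ^ 2)) x₀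
      _ = c * Real.sqrt (Real.pi / b) := by rw [integral_const_mul, integral_gaussian]
      _ = 1 := hnorm
  have hm1 : (∫ x : ℝ, x * ρ x) = x₀ := by
    have e : ∀ x : ℝ, x * ρ x
        = c * ((x - x₀) * Real.exp (-b * (x - x₀) ^ 2))
          + (c * x₀) * Real.exp (-b * (x - x₀) ^ 2) := by
      intro x; rw [hρ' x]; ring
    calc (∫ x : ℝ, x * ρ x)
        = ∫ x : ℝ, (c * ((x - x₀) * Real.exp (-b * (x - x₀) ^ 2))
            + (c * x₀) * Real.exp (-b * (x - x₀) ^ 2)) := by simp only [e]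
      _ = ∫ y : ℝ, (c * (y * Real.exp (-b * y ^ 2)) + (c * x₀) * Real.exp (-b * y ^ 2)) :=
          integral_sub_right_eq_self
            (fun y => c * (y * Real.exp (-b * y ^ 2)) + (c * x₀) * Real.exp (-b * y ^ 2)) x₀
      _ = c * (∫ y : ℝ, y * Real.exp (-b * y ^ 2))
            + (c * x₀) * ∫ y : ℝ, Real.exp (-b * y ^ 2) := by
          rw [integral_add (((integrable_mul_exp_neg_mul_sq hb).const_mul c))
            ((integrable_exp_neg_mul_sq hb).const_mul _), integral_const_mul,
            integral_const_mul]
      _ = x₀ := by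
          rw [integral_x_mul_exp hb, integral_gaussian]
          rw [mul_zero, zero_add]
          calc c * x₀ * Real.sqrt (Real.pi / b)
              = x₀ * (c * Real.sqrt (Real.pi / b)) := by ring
            _ = x₀ := by rw [hnorm, mul_one]
  have hm2 : (∫ x : ℝ, x ^ 2 * ρ x) = s ^ 2 + x₀ ^ 2 := by
    have e : ∀ x : ℝ, x ^ 2 * ρ x
        = c * ((x - x₀) ^ 2 * Real.exp (-b * (x - x₀) ^ 2))
            + (2 * c * x₀) * ((x - x₀) * Real.exp (-b * (x - x₀) ^ 2))
            + (c * x₀ ^ 2) * Real.exp (-b * (x - x₀) ^ 2) := by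
      intro x; rw [hρ' x]; ring
    have i1 : Integrable fun y : ℝ => c * (y ^ 2 * Real.exp (-b * y ^ 2)) :=
      (integrable_sq_mul_exp hb).const_mul c
    have i2 : Integrable fun y : ℝ => (2 * c * x₀) * (y * Real.exp (-b * y ^ 2)) :=
      (integrable_mul_exp_neg_mul_sq hb).const_mul _
    have i3 : Integrable fun y : ℝ => (c * x₀ ^ 2) * Real.exp (-b * y ^ 2) :=
      (integrable_exp_neg_mul_sq hb).const_mul _
    calc (∫ x : ℝ, x ^ 2 * ρ x)
        = ∫ x : ℝ, (c * ((x - x₀) ^ 2 * Real.exp (-b * (x - x₀) ^ 2))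
            + (2 * c * x₀) * ((x - x₀) * Real.exp (-b * (x - x₀) ^ 2))
            + (c * x₀ ^ 2) * Real.exp (-b * (x - x₀) ^ 2)) := by simp only [e]
      _ = ∫ y : ℝ, (c * (y ^ 2 * Real.exp (-b * y ^ 2))
            + (2 * c * x₀) * (y * Real.exp (-b * y ^ 2))
            + (c * x₀ ^ 2) * Real.exp (-b * y ^ 2)) :=
          integral_sub_right_eq_self
            (fun y => c * (y ^ 2 * Real.exp (-b * y ^ 2))
              + (2 * c * x₀) * (y * Real.exp (-b * y ^ 2))
              + (c * x₀ ^ 2) * Real.exp (-b * y ^ 2)) x₀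
      _ = c * (∫ y : ℝ, y ^ 2 * Real.exp (-b * y ^ 2))
            + (2 * c * x₀) * (∫ y : ℝ, y * Real.exp (-b * y ^ 2))
            + (c * x₀ ^ 2) * ∫ y : ℝ, Real.exp (-b * y ^ 2) := by
          have i12 : Integrable fun y : ℝ => c * (y ^ 2 * Real.exp (-b * y ^ 2))
              + (2 * c * x₀) * (y * Real.exp (-b * y ^ 2)) := i1.add i2
          rw [integral_add i12 i3, integral_add i1 i2, integral_const_mul,
            integral_const_mul, integral_const_mul]
      _ = s ^ 2 + x₀ ^ 2 := by
          rw [integral_sq_mul_exp hb, integral_x_mul_exp hb, integral_gaussian]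
          have h1 : c * (Real.sqrt (Real.pi / b) / (2 * b))
              = (2 * b)⁻¹ * (c * Real.sqrt (Real.pi / b)) := by ring
          have h2 : c * x₀ ^ 2 * Real.sqrt (Real.pi / b)
              = x₀ ^ 2 * (c * Real.sqrt (Real.pi / b)) := by ring
          rw [mul_zero, add_zero, h1, h2, hnorm, mul_one, mul_one, hs2b]
  have hint_s2 : (∫ x : ℝ, s ^ 2 * ρ x) = s ^ 2 := by
    rw [integral_const_mul, hm0, mul_one]
  have hvar : (∫ x : ℝ, x ^ 2 * ρ x) - (∫ x : ℝ, x * ρ x) ^ 2 = s ^ 2 := by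
    rw [hm2, hm1]; ring
  refine ⟨?_, hint_s2, hvar, by rw [hint_s2, hvar, div_self (ne_of_gt hs2)]⟩
  intro x
  have hg : HasDerivAt (fun y : ℝ => -(y - x₀) ^ 2 / (2 * s ^ 2)) (-(x - x₀) / s ^ 2) x := by
    have h1 : HasDerivAt (fun y : ℝ => (y - x₀) ^ 2) (2 * (x - x₀)) x := by
      have := ((hasDerivAt_id x).sub_const x₀).fun_pow 2
      simp at this
      exact this
    have h2 := (h1.neg).div_const (2 * s ^ 2)
    refine h2.congr_deriv ?_
    field_simp
  have hd : HasDerivAt (fun y : ℝ => 2 * s ^ 2 *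
      (Real.exp (-(y - x₀) ^ 2 / (2 * s ^ 2)) / Real.sqrt (2 * Real.pi * s ^ 2)))
      (2 * s ^ 2 * (Real.exp (-(x - x₀) ^ 2 / (2 * s ^ 2)) * (-(x - x₀) / s ^ 2)
        / Real.sqrt (2 * Real.pi * s ^ 2))) x :=
    (hg.exp.div_const (Real.sqrt (2 * Real.pi * s ^ 2))).const_mul (2 * s ^ 2)
  have hfun : (fun y => 2 * s ^ 2 * ρ y)
      = fun y : ℝ => 2 * s ^ 2 *
        (Real.exp (-(y - x₀) ^ 2 / (2 * s ^ 2)) / Real.sqrt (2 * Real.pi * s ^ 2)) := by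
    funext y; rw [hρ y]
  rw [hfun, hd.deriv, hρ x]
  have hexp : Real.exp (-(x - x₀) ^ 2 / (2 * s ^ 2)) ≠ 0 := Real.exp_ne_zero _
  field_simp
  ring
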